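/- For every integer j ≥ 2, the central binomial coefficient satisfies C(2^j, 2^{j−1}) ≡ 6 (mod 8). -/

import Mathlib

open Finset

/-- `2^j ∣ k * C(2^j, k)`. -/
lemma pow_dvd_mul_choose (j k : ℕ) (hk : 0 < k) (hk' : k ≤ 2 ^ j) :
    2 ^ j ∣ Nat.choose (2 ^ j) k * k := by
  obtain ⟨n, hn⟩ : ∃ n, 2 ^ j = n + 1 := ⟨2 ^ j - 1, by omega⟩
  obtain ⟨l, hl⟩ : ∃ l, k = l + 1 := ⟨k - 1, by omega⟩
  rw [hn, hl, ← Nat.add_one_mul_choose_eq]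
  exact ⟨Nat.choose n l, rfl⟩

/-- For `0 < k < 2^j`, `k ≠ 2^(j-1)`, `j ≥ 2`: `4 ∣ C(2^j, k)`. -/
lemma four_dvd_choose (j k : ℕ) (hj : 2 ≤ j) (hk : 0 < k) (hk2 : k < 2 ^ j)
    (hkh : k ≠ 2 ^ (j - 1)) : 4 ∣ Nat.choose (2 ^ j) k := by
  set v := k.factorization 2 with hv
  set m := k / 2 ^ v with hm
  have hkeq : 2 ^ v * m = k := Nat.ordProj_mul_ordCompl_eq_self k 2
  have hmodd : ¬ 2 ∣ m := Nat.not_dvd_ordCompl Nat.prime_two hk.ne'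
  have hmpos : 0 < m := by
    rcases Nat.eq_zero_or_pos m with h | h
    · omega
    · exact h
  have hvlt : v < j := by
    have h1 : 2 ^ v ≤ k := Nat.le_of_dvd hk ⟨m, hkeq.symm⟩
    have h2 : 2 ^ v < 2 ^ j := lt_of_le_of_lt h1 hk2
    exact (Nat.pow_lt_pow_iff_right (by norm_num)).mp h2
  have hvne : v ≠ j - 1 := by
    intro hveq
    rw [hveq] at hkeq
    have h2 : 2 ^ (j - 1) * m < 2 ^ (j - 1) * 2 := by
      rw [hkeq]
      calc k < 2 ^ j := hk2
        _ = 2 ^ (j - 1) * 2 := by rw [← pow_succ]; congr 1; omega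
    have hm2 : m < 2 := lt_of_mul_lt_mul_left h2 (Nat.zero_le _)
    have hm1 : m = 1 := by omega
    rw [hm1, mul_one] at hkeq
    exact hkh hkeq.symm
  have hvle : v + 2 ≤ j := by omega
  have hd : 2 ^ j ∣ Nat.choose (2 ^ j) k * k :=
    pow_dvd_mul_choose j k hk hk2.le
  have hd2 : 2 ^ (v + 2) ∣ Nat.choose (2 ^ j) k * (2 ^ v * m) := by
    rw [hkeq]
    exact dvd_trans (pow_dvd_pow 2 hvle) hd
  have hd3 : 2 ^ 2 * 2 ^ v ∣ (Nat.choose (2 ^ j) k * m) * 2 ^ v := by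
    have : 2 ^ (v + 2) = 2 ^ 2 * 2 ^ v := by ring
    rw [← this]
    calc 2 ^ (v + 2) ∣ Nat.choose (2 ^ j) k * (2 ^ v * m) := hd2
      _ = (Nat.choose (2 ^ j) k * m) * 2 ^ v := by ring
  have hd4 : (4 : ℕ) ∣ Nat.choose (2 ^ j) k * m := by
    have h5 := (Nat.mul_dvd_mul_iff_right (c := 2 ^ v) (Nat.pow_pos (n := v) (by norm_num))).mp hd3
    simpa using h5
  have hcop : Nat.Coprime 4 m := by
    have h2 : Nat.Coprime 2 m := (Nat.Prime.coprime_iff_not_dvd Nat.prime_two).mpr hmodd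
    have h3 : Nat.Coprime (2 ^ 2) m := Nat.Coprime.pow_left 2 h2
    simpa using h3
  exact hcop.dvd_of_dvd_mul_right hd4

/-- For `j ≥ 2`, `C(2^j, 2^(j-1)) ≡ 6 (mod 8)`. -/
theorem central_binom_mod_eight (j : ℕ) (hj : 2 ≤ j) :
    Nat.choose (2 ^ j) (2 ^ (j - 1)) ≡ 6 [MOD 8] := by
  induction j, hj using Nat.le_induction with
  | base => decide
  | succ j hj ih =>
    rw [← ZMod.natCast_eq_natCast_iff] at ih ⊢
    have hN : (2 : ℕ) ^ (j + 1) = 2 ^ j + 2 ^ j := by ring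
    have hsub : j + 1 - 1 = j := rfl
    rw [hsub, hN, Nat.add_choose_eq, Finset.Nat.sum_antidiagonal_eq_sum_range_succ_mk]
    -- now sum over k in range (2^j + 1) of C(2^j, k) * C(2^j, 2^j - k)
    push_cast
    set N := 2 ^ j with hNdef
    set h := 2 ^ (j - 1) with hhdef
    have hhN : h < N := by
      rw [hNdef, hhdef]
      exact Nat.pow_lt_pow_right (by norm_num) (by omega)
    have hhpos : 0 < h := Nat.pow_pos (by norm_num)
    have hsubset : ({0, h, N} : Finset ℕ) ⊆ Finset.range (N + 1) := by
      intro x hx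
      simp only [Finset.mem_insert, Finset.mem_singleton] at hx
      rcases hx with rfl | rfl | rfl <;> simp [Finset.mem_range] <;> omega
    rw [← Finset.sum_subset hsubset]
    · have h0h : (0 : ℕ) ≠ h := hhpos.ne
      have h0N : (0 : ℕ) ≠ N := (hhpos.trans hhN).ne
      have hhN' : h ≠ N := hhN.ne
      rw [Finset.sum_insert (by simp [h0h, h0N]),
          Finset.sum_insert (by simp [hhN'])]
      simp only [Finset.sum_singleton]
      rw [Nat.choose_zero_right, Nat.choose_self, Nat.sub_zero, Nat.sub_self,
        Nat.choose_zero_right, Nat.choose_symm hhN.le]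
      rw [Nat.choose_self]
      have : ((Nat.choose N h : ℕ) : ZMod 8) = 6 := ih
      push_cast
      rw [this]
      decide
    · intro k hk hk'
      simp only [Finset.mem_range] at hk
      simp only [Finset.mem_insert, Finset.mem_singleton, not_or] at hk'
      obtain ⟨hk0, hkh, hkN⟩ := hk'
      have hkpos : 0 < k := Nat.pos_of_ne_zero hk0
      have hkN' : k < N := lt_of_le_of_ne (by omega) hkN
      have h4 : 4 ∣ Nat.choose N k := four_dvd_choose j k hj hkpos hkN' hkh
      have hsym : Nat.choose N (N - k) = Nat.choose N k := Nat.choose_symm hkN'.le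
      obtain ⟨c, hc⟩ := h4
      rw [hsym, hc]
      push_cast
      have h8 : ((4 : ZMod 8) * c) * (4 * c) = 16 * (c * c) := by ring
      rw [h8]
      have : (16 : ZMod 8) = 0 := by decide
      rw [this, zero_mul]
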